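/- arXiv:2311.00620 — 4 statements merged into one kernel-verified Lean document; each statement's English description precedes it below -/
import Mathlib

section
/- Let G be a finitely generated abelian group with a full archimedean bi-invariant partial order ≺. Then G contains a unique maximal antichain subgroup, i.e. there is exactly one subgroup H ≤ G such that H is an antichain and H is maximal among subgroups of G that are antichains. -/
/-- A bi-invariant partial order on a group `G`. -/
structure IsBIPO {G : Type*} [Group G] (r : G → G → Prop) : Prop where
  irrefl : ∀ g, ¬ r g g
  antisymm : ∀ g h, r g h → ¬ r h g
  trans : ∀ f g h, r f g → r g h → r f h
  mul_left : ∀ f g h, r f g → r (h * f) (h * g)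
  mul_right : ∀ f g h, r f g → r (f * h) (g * h)

/-- The positive cone of an order on a group. -/
def posCone {G : Type*} [Group G] (r : G → G → Prop) : Set G := {g | r 1 g}

/-- A homomorphism between ordered groups is order preserving. -/
def OrderPreservingHom {G Q : Type*} [Group G] [Group Q]
    (φ : G →* Q) (rG : G → G → Prop) (rQ : Q → Q → Prop) : Prop :=
  ∀ g h, rG g h → rQ (φ g) (φ h) ∨ φ g = φ h

/-- `S` is an antichain for `r`: no two elements of `S` are related. -/
def IsAntichainFor {G : Type*} (r : G → G → Prop) (S : Set G) : Prop :=
  ∀ s ∈ S, ∀ t ∈ S, ¬ r s t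

/-- `S` is a maximal antichain for `r`. -/
def IsMaxAntichainFor {G : Type*} (r : G → G → Prop) (S : Set G) : Prop :=
  IsAntichainFor r S ∧ ∀ T : Set G, IsAntichainFor r T → S ⊆ T → T = S

/-- `H` is a maximal antichain subgroup for `r`. -/
def IsMaxAntichainSubgroup {G : Type*} [Group G] (r : G → G → Prop) (H : Subgroup G) : Prop :=
  IsAntichainFor r (H : Set G) ∧
    ∀ K : Subgroup G, IsAntichainFor r (K : Set G) → H ≤ K → K = H

/-- The order is primitive. -/
def PrimitiveOrder {G : Type*} [Group G] (r : G → G → Prop) : Prop :=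
  ∀ g h : G, ∀ n : ℕ, 1 ≤ n → r (g ^ n) (h ^ n) → r g h

/-- The order is factorizing. -/
def FactorizingOrder {G : Type*} [Group G] (r : G → G → Prop) : Prop :=
  ∀ (H : Subgroup G) [H.Normal], IsAntichainFor r (H : Set G) →
    ∃ r' : (G ⧸ H) → (G ⧸ H) → Prop, IsBIPO r' ∧
      ∀ g h : G, r g h ↔ r' (g : G ⧸ H) (h : G ⧸ H)

/-- The order is full: primitive and factorizing. -/
def FullOrder {G : Type*} [Group G] (r : G → G → Prop) : Prop :=
  PrimitiveOrder r ∧ FactorizingOrder r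

/-- The order is archimedean: no positive infinitesimal elements. -/
def ArchimedeanOrderFor {G : Type*} [Group G] (r : G → G → Prop) : Prop :=
  ¬ ∃ g h : G, r 1 g ∧ ∀ i : ℤ, r (g ^ i) h

/-- The order is non-trivial. -/
def NontrivialOrder {G : Type*} (r : G → G → Prop) : Prop := ∃ g h, r g h

/-- A subset `K` of a group is coarsely connected. -/
def CoarselyConnected {G : Type*} [Group G] (K : Set G) : Prop :=
  ∃ (H : Subgroup G) (S : Finset G),
    K ⊆ (H : Set G) ∧ Subgroup.closure (S : Set G) = H ∧
    ∀ g ∈ K, ∀ h ∈ K, ∃ (n : ℕ) (c : ℕ → G),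
      c 0 = g ∧ c n = h ∧ (∀ i ≤ n, c i ∈ K) ∧
      ∀ i < n, (c i)⁻¹ * c (i + 1) ∈ (S : Set G) ∪ ((S : Set G))⁻¹

lemma aux_not_zpow {G : Type*} [CommGroup G] (r : G → G → Prop) (hr : IsBIPO r)
    (hp : PrimitiveOrder r) (g : G) (h1 : ¬ r 1 g) (h2 : ¬ r g 1) :
    ∀ n : ℤ, ¬ r 1 (g ^ n) := by
  intro n hn
  rcases lt_trichotomy n 0 with h | h | h
  · have hn' : r 1 ((g⁻¹) ^ (-n).toNat) := by
      rw [← zpow_natCast, Int.toNat_of_nonneg (by omega), inv_zpow, ← zpow_neg, neg_neg]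
      exact hn
    have := hp 1 g⁻¹ (-n).toNat (by omega) (by rw [one_pow]; exact hn')
    exact h2 (by simpa using hr.mul_left 1 g⁻¹ g this)
  · subst h; exact hr.irrefl 1 (by simpa using hn)
  · have hn' : r 1 (g ^ n.toNat) := by
      rw [← zpow_natCast, Int.toNat_of_nonneg (by omega)]; exact hn
    exact h1 (hp 1 g n.toNat (by omega) (by rw [one_pow]; exact hn'))

lemma aux_zpowers_antichain {G : Type*} [CommGroup G] (r : G → G → Prop) (hr : IsBIPO r)
    (hp : PrimitiveOrder r) (g : G) (h1 : ¬ r 1 g) (h2 : ¬ r g 1) :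
    IsAntichainFor r ((Subgroup.zpowers g : Subgroup G) : Set G) := by
  rintro s hs t ht hst
  rw [SetLike.mem_coe, Subgroup.mem_zpowers_iff] at hs ht
  obtain ⟨m, rfl⟩ := hs
  obtain ⟨k, rfl⟩ := ht
  have h3 := hr.mul_left _ _ (g ^ (-m)) hst
  rw [← zpow_add, ← zpow_add, neg_add_cancel, zpow_zero] at h3
  exact aux_not_zpow r hr hp g h1 h2 _ h3

/-- A finitely generated abelian group with a full archimedean bi-invariant partial order
contains a unique maximal antichain subgroup. -/
theorem unique_max_antichain_subgroup_abelian {G : Type*} [CommGroup G] [Group.FG G]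
    (r : G → G → Prop) (hr : IsBIPO r) (hfull : FullOrder r) (harch : ArchimedeanOrderFor r) :
    ∃! H : Subgroup G, IsMaxAntichainSubgroup r H := by
  obtain ⟨hp, hf⟩ := hfull
  have key : ∀ g h : G, (¬ r 1 g ∧ ¬ r g 1) → (¬ r 1 h ∧ ¬ r h 1) →
      (¬ r 1 (g * h) ∧ ¬ r (g * h) 1) := by
    intro g h hg hh
    obtain ⟨r', hr', hiff⟩ := hf (Subgroup.zpowers g)
      (aux_zpowers_antichain r hr hp g hg.1 hg.2)
    have hg1 : ((g : G) : G ⧸ Subgroup.zpowers g) = 1 := by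
      rw [QuotientGroup.eq_one_iff]; exact Subgroup.mem_zpowers g
    constructor
    · intro hcon
      apply hh.1
      rw [hiff 1 h]
      have h4 := (hiff 1 (g * h)).1 hcon
      simpa [hg1] using h4
    · intro hcon
      apply hh.2
      rw [hiff h 1]
      have h4 := (hiff (g * h) 1).1 hcon
      simpa [hg1] using h4
  let H : Subgroup G :=
    { carrier := {g | ¬ r 1 g ∧ ¬ r g 1}
      one_mem' := ⟨hr.irrefl 1, hr.irrefl 1⟩
      mul_mem' := fun ha hb => key _ _ ha hb
      inv_mem' := by
        intro x hx
        constructor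
        · intro hcon; exact hx.2 (by simpa using hr.mul_left 1 x⁻¹ x hcon)
        · intro hcon; exact hx.1 (by simpa using hr.mul_left x⁻¹ 1 x hcon) }
  have Hanti : IsAntichainFor r (H : Set G) := by
    intro s hs t ht hst
    have hmem : ¬ r 1 (s⁻¹ * t) ∧ ¬ r (s⁻¹ * t) 1 := H.mul_mem (H.inv_mem hs) ht
    exact hmem.1 (by simpa using hr.mul_left s t s⁻¹ hst)
  have hsub : ∀ K : Subgroup G, IsAntichainFor r (K : Set G) → K ≤ H := by
    intro K hK x hx
    exact ⟨fun hcon => hK 1 K.one_mem x hx hcon, fun hcon => hK x hx 1 K.one_mem hcon⟩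
  refine ⟨H, ⟨Hanti, fun K hK hHK => le_antisymm (hsub K hK) hHK⟩, ?_⟩
  intro H' hH'
  exact (hH'.2 H Hanti (hsub H' hH'.1)).symm
end

section
/- Let G be a finitely generated abelian group with a full archimedean bi-invariant partial order ≺, and let H ≤ G be a maximal antichain subgroup of G. Then there exists a bi-invariant partial order ≺' on the quotient G/H that is total (any two distinct elements comparable) and satisfies g ≺ h iff gH ≺' hH for all g, h ∈ G; moreover, there exists a group homomorphism Φ : G → ℝ such that for all g, h ∈ G, g ≺ h iff Φ(g) < Φ(h). -/
lemma holder_embed {Q : Type*} [CommGroup Q] (r : Q → Q → Prop) (hr : IsBIPO r)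
    (htot : ∀ a b : Q, a ≠ b → r a b ∨ r b a)
    (harch : ¬ ∃ g h : Q, r 1 g ∧ ∀ i : ℤ, r (g ^ i) h) :
    ∃ φ : Q → ℝ, (∀ a b, φ (a * b) = φ a + φ b) ∧ ∀ g h, r g h ↔ φ g < φ h := by
  classical
  -- trivial case
  by_cases hnt : ∃ u : Q, r 1 u
  case neg =>
    refine ⟨fun _ => 0, fun _ _ => by ring, fun g h => ?_⟩
    constructor
    · intro hgh
      exact absurd ⟨g⁻¹ * h, by simpa using hr.mul_left g h g⁻¹ hgh⟩ hnt
    · simp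
  obtain ⟨u, hu⟩ := hnt
  set le : Q → Q → Prop := fun a b => r a b ∨ a = b with hle_def
  have le_refl : ∀ a, le a a := fun a => Or.inr rfl
  have le_total' : ∀ a b, le a b ∨ le b a := by
    intro a b
    rcases eq_or_ne a b with h | h
    · exact Or.inl (Or.inr h)
    · rcases htot a b h with h' | h'
      · exact Or.inl (Or.inl h')
      · exact Or.inr (Or.inl h')
  have le_trans : ∀ a b c, le a b → le b c → le a c := by
    rintro a b c (h1 | rfl) (h2 | rfl)
    · exact Or.inl (hr.trans _ _ _ h1 h2)
    · exact Or.inl h1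
    · exact Or.inl h2
    · exact Or.inr rfl
  have lt_of_le_of_lt : ∀ a b c, le a b → r b c → r a c := by
    rintro a b c (h1 | rfl) h2
    · exact hr.trans _ _ _ h1 h2
    · exact h2
  have lt_of_lt_of_le : ∀ a b c, r a b → le b c → r a c := by
    rintro a b c h1 (h2 | rfl)
    · exact hr.trans _ _ _ h1 h2
    · exact h1
  have le_mul_left : ∀ a b c, le a b → le (c * a) (c * b) := by
    rintro a b c (h | rfl)
    · exact Or.inl (hr.mul_left _ _ _ h)
    · exact Or.inr rfl
  have le_mul : ∀ a b c d : Q, le a b → le c d → le (a * c) (b * d) := by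
    intro a b c d h1 h2
    refine le_trans _ (a * d) _ (le_mul_left _ _ _ h2) ?_
    rw [mul_comm a d, mul_comm b d]
    exact le_mul_left _ _ _ h1
  have le_inv : ∀ a b : Q, le a b → le b⁻¹ a⁻¹ := by
    intro a b h
    have := le_mul_left a b (a⁻¹ * b⁻¹) h
    simpa [mul_comm, mul_assoc, mul_left_comm] using this
  have lt_inv : ∀ a b : Q, r a b → r b⁻¹ a⁻¹ := by
    intro a b h
    have := hr.mul_left a b (a⁻¹ * b⁻¹) h
    simpa [mul_comm, mul_assoc, mul_left_comm] using this
  have pos_mul : ∀ a b : Q, r 1 a → r 1 b → r 1 (a * b) := by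
    intro a b ha hb
    have : r b (a * b) := by simpa using hr.mul_right 1 a b ha
    exact hr.trans _ _ _ hb this
  -- positivity of powers
  have pow_pos : ∀ (a : Q) (n : ℕ), r 1 a → 1 ≤ n → r 1 (a ^ n) := by
    intro a n ha hn
    induction n with
    | zero => omega
    | succ k ih =>
      rcases Nat.eq_or_lt_of_le (Nat.zero_le k) with h | h
      · simpa [← h] using ha
      · have := ih h
        rw [pow_succ]
        exact pos_mul _ _ this ha
  have zpow_pos : ∀ (a : Q) (k : ℤ), r 1 a → 0 < k → r 1 (a ^ k) := by
    intro a k ha hk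
    have h1 : a ^ k = a ^ k.toNat := by
      rw [← zpow_natCast, Int.toNat_of_nonneg hk.le]
    rw [h1]
    exact pow_pos a k.toNat ha (by omega)
  have zpow_nonneg : ∀ (a : Q) (k : ℤ), r 1 a → 0 ≤ k → le 1 (a ^ k) := by
    intro a k ha hk
    rcases eq_or_lt_of_le hk with h | h
    · exact Or.inr (by rw [← h, zpow_zero])
    · exact Or.inl (zpow_pos a k ha h)
  have zpow_le_mono : ∀ (v : Q), r 1 v → ∀ (m k : ℤ), m ≤ k → le (v ^ m) (v ^ k) := by
    intro v hv m k hmk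
    have h1 : v ^ k = v ^ m * v ^ (k - m) := by rw [← zpow_add]; ring_nf
    rw [h1]
    have := le_mul_left 1 (v ^ (k - m)) (v ^ m) (zpow_nonneg v (k - m) hv (by omega))
    simpa using this
  have zpow_lt_strict : ∀ (m k : ℤ), m < k → r (u ^ m) (u ^ k) := by
    intro m k hmk
    have h1 : u ^ k = u ^ m * u ^ (k - m) := by rw [← zpow_add]; ring_nf
    rw [h1]
    have := hr.mul_left 1 (u ^ (k - m)) (u ^ m) (zpow_pos u (k - m) hu (by omega))
    simpa using this
  have zpow_reflect : ∀ (m k : ℤ), le (u ^ m) (u ^ k) → m ≤ k := by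
    intro m k h
    by_contra hc
    have h2 := zpow_lt_strict k m (by omega)
    rcases h with h | h
    · exact hr.antisymm _ _ h2 h
    · rw [h] at h2; exact hr.irrefl _ h2
  have pow_le_mono : ∀ (a b : Q) (n : ℕ), le a b → le (a ^ n) (b ^ n) := by
    intro a b n h
    induction n with
    | zero => simp [le_refl]
    | succ k ih =>
      rw [pow_succ, pow_succ]
      exact le_mul _ _ _ _ ih h
  have zpow_le_mono' : ∀ (a b : Q) (n : ℤ), 0 ≤ n → le a b → le (a ^ n) (b ^ n) := by
    intro a b n hn h
    have h1 : a ^ n = a ^ n.toNat := by rw [← zpow_natCast, Int.toNat_of_nonneg hn]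
    have h2 : b ^ n = b ^ n.toNat := by rw [← zpow_natCast, Int.toNat_of_nonneg hn]
    rw [h1, h2]
    exact pow_le_mono a b n.toNat h
  -- archimedean property
  have arch : ∀ v x : Q, r 1 v → ∃ n : ℤ, 0 < n ∧ le x (v ^ n) := by
    intro v x hv
    by_contra hc
    push_neg at hc
    have key : ∀ i : ℤ, r (v ^ i) x := by
      have h1 : r v x := by
        have := hc 1 one_pos
        rcases le_total' x (v ^ (1:ℤ)) with h | h
        · exact absurd h this
        · rcases h with h | h
          · simpa using h
          · exact absurd (Or.inr h.symm) this
      intro i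
      rcases lt_or_ge 0 i with hi | hi
      · rcases le_total' x (v ^ i) with h | h
        · exact absurd h (hc i hi)
        · rcases h with h | h
          · exact h
          · exact absurd (Or.inr h.symm) (hc i hi)
      · have h2 : le (v ^ i) (v ^ (1:ℤ)) := zpow_le_mono v hv i 1 (by omega)
        rw [zpow_one] at h2
        exact lt_of_le_of_lt _ _ _ h2 h1
    exact harch ⟨v, x, hv, key⟩
  -- the set of rational approximations
  set S : Q → Set ℝ := fun x => {t | ∃ m n : ℤ, 0 < n ∧ t = (m : ℝ) / (n : ℝ) ∧ le (u ^ m) (x ^ n)}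
    with hS_def
  have hne : ∀ x : Q, (S x).Nonempty := by
    intro x
    obtain ⟨n, hn, hle⟩ := arch u x⁻¹ hu
    have h2 : le (u ^ (-n)) x := by
      have := le_inv _ _ hle
      rw [zpow_neg]
      simpa using this
    exact ⟨((-n : ℤ) : ℝ) / ((1 : ℤ) : ℝ), -n, 1, one_pos, rfl, by simpa using h2⟩
  have hbdd : ∀ x : Q, BddAbove (S x) := by
    intro x
    obtain ⟨N, hN, hle⟩ := arch u x hu
    refine ⟨(N : ℝ), fun t ht => ?_⟩
    obtain ⟨m, n, hn, rfl, hmn⟩ := ht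
    have h1 : le (x ^ n) (u ^ (N * n)) := by
      rw [zpow_mul]
      exact zpow_le_mono' x (u ^ N) n hn.le hle
    have h2 : m ≤ N * n := zpow_reflect _ _ (le_trans _ _ _ hmn h1)
    rw [div_le_iff₀ (by exact_mod_cast hn)]
    calc (m : ℝ) ≤ ((N * n : ℤ) : ℝ) := by exact_mod_cast h2
    _ = N * n := by push_cast; ring
  set φ : Q → ℝ := fun x => sSup (S x) with hφ_def
  have hmem_le : ∀ (x : Q) (t : ℝ), t ∈ S x → t ≤ φ x := fun x t ht => le_csSup (hbdd x) ht
  -- φ 1 = 0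
  have hφ_one : φ 1 = 0 := by
    apply le_antisymm
    · apply csSup_le (hne 1)
      rintro t ⟨m, n, hn, rfl, hmn⟩
      rw [one_zpow] at hmn
      have hm : m ≤ 0 := by
        have : le (u ^ m) (u ^ (0 : ℤ)) := by simpa using hmn
        exact zpow_reflect _ _ this
      apply div_nonpos_of_nonpos_of_nonneg
      · exact_mod_cast hm
      · exact_mod_cast hn.le
    · apply hmem_le
      exact ⟨0, 1, one_pos, by norm_num, by simpa using le_refl (1 : Q)⟩
  -- superadditivity
  have hsum_mem : ∀ (x y : Q) (a b : ℝ), a ∈ S x → b ∈ S y → a + b ∈ S (x * y) := by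
    rintro x y a b ⟨m1, n1, hn1, rfl, h1⟩ ⟨m2, n2, hn2, rfl, h2⟩
    refine ⟨m1 * n2 + m2 * n1, n1 * n2, mul_pos hn1 hn2, ?_, ?_⟩
    · have e1 : ((n1 : ℝ)) ≠ 0 := by exact_mod_cast hn1.ne'
      have e2 : ((n2 : ℝ)) ≠ 0 := by exact_mod_cast hn2.ne'
      push_cast
      field_simp
      try ring
    · have ha : le ((u ^ m1) ^ n2) ((x ^ n1) ^ n2) := zpow_le_mono' _ _ n2 hn2.le h1
      have hb : le ((u ^ m2) ^ n1) ((y ^ n2) ^ n1) := zpow_le_mono' _ _ n1 hn1.le h2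
      have := le_mul _ _ _ _ ha hb
      rw [← zpow_mul, ← zpow_mul, ← zpow_mul, ← zpow_mul, ← zpow_add] at this
      rw [show n2 * n1 = n1 * n2 from mul_comm _ _] at this
      rw [mul_zpow]
      exact this
  have hsuper : ∀ x y : Q, φ x + φ y ≤ φ (x * y) := by
    intro x y
    have key : ∀ a ∈ S x, ∀ b ∈ S y, a + b ≤ φ (x * y) := fun a ha b hb =>
      hmem_le _ _ (hsum_mem x y a b ha hb)
    have h1 : ∀ a ∈ S x, a ≤ φ (x * y) - φ y := by
      intro a ha
      have : φ y ≤ φ (x * y) - a := csSup_le (hne y) (fun b hb => by linarith [key a ha b hb])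
      linarith
    have := csSup_le (hne x) h1
    linarith
  -- φ x + φ x⁻¹ = 0
  have hinv_sum : ∀ x : Q, φ x + φ x⁻¹ = 0 := by
    intro x
    have hle1 : φ x + φ x⁻¹ ≤ 0 := by
      have := hsuper x x⁻¹
      rw [mul_inv_cancel, hφ_one] at this
      linarith
    have hge : ∀ n : ℤ, 0 < n → -1 / (n : ℝ) ≤ φ x + φ x⁻¹ := by
      intro n hn
      -- greatest m with u^m ≤ x^n
      obtain ⟨m, hm, hmax⟩ := Int.exists_greatest_of_bdd
        (P := fun m => le (u ^ m) (x ^ n))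
        (by
          obtain ⟨N, hN, hle⟩ := arch u (x ^ n) hu
          exact ⟨N, fun z hz => zpow_reflect _ _ (le_trans _ _ _ hz hle)⟩)
        (by
          obtain ⟨k, hk, hle⟩ := arch u (x ^ n)⁻¹ hu
          refine ⟨-k, ?_⟩
          show le (u ^ (-k : ℤ)) (x ^ n)
          have := le_inv _ _ hle
          rw [zpow_neg]
          simpa using this)
      have h1 : (m : ℝ) / n ≤ φ x := hmem_le x _ ⟨m, n, hn, rfl, hm⟩
      have h2 : ((-(m + 1) : ℤ) : ℝ) / n ≤ φ x⁻¹ := by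
        apply hmem_le x⁻¹
        refine ⟨-(m + 1), n, hn, rfl, ?_⟩
        have hnot : ¬ le (u ^ (m + 1)) (x ^ n) := fun h => by have := hmax _ h; omega
        have hlt : le (x ^ n) (u ^ (m + 1)) := by
          rcases le_total' (u ^ (m + 1)) (x ^ n) with h | h
          · exact absurd h hnot
          · exact h
        have := le_inv _ _ hlt
        rw [← zpow_neg, ← inv_zpow] at this
        exact this
      have hnR : (0 : ℝ) < (n : ℝ) := by exact_mod_cast hn
      have : (m : ℝ) / n + ((-(m + 1) : ℤ) : ℝ) / n = -1 / n := by
        push_cast; field_simp; ring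
      linarith
    refine le_antisymm hle1 (le_of_not_gt fun hc => ?_)
    set s := φ x + φ x⁻¹ with hs_def
    obtain ⟨k, hk⟩ := exists_nat_gt (-s)⁻¹
    have hspos : (0 : ℝ) < -s := by simpa using hc
    have hkpos : (0 : ℝ) < (k : ℝ) := lt_trans (inv_pos.2 hspos) hk
    have hkz : (0 : ℤ) < (k : ℤ) := by exact_mod_cast hkpos
    have h1 := hge (k : ℤ) hkz
    push_cast at h1
    rw [div_le_iff₀ hkpos] at h1
    have h3 : 1 < (k : ℝ) * (-s) := by
      have := mul_lt_mul_of_pos_right hk hspos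
      rwa [inv_mul_cancel₀ hspos.ne'] at this
    nlinarith
  -- additivity
  have hadd : ∀ x y : Q, φ (x * y) = φ x + φ y := by
    intro x y
    refine le_antisymm ?_ (hsuper x y)
    have h1 := hsuper (x * y) x⁻¹
    rw [show x * y * x⁻¹ = y by rw [mul_comm x y, mul_assoc, mul_inv_cancel, mul_one]] at h1
    have h2 := hinv_sum x
    linarith
  have hφ_inv : ∀ x : Q, φ x⁻¹ = -φ x := fun x => by have := hinv_sum x; linarith
  -- positivity
  have hpos : ∀ z : Q, r 1 z → 0 < φ z := by
    intro z hz
    obtain ⟨n, hn, hle⟩ := arch z u hz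
    have h1 : ((1 : ℤ) : ℝ) / (n : ℝ) ≤ φ z := hmem_le z _ ⟨1, n, hn, rfl, by simpa using hle⟩
    have hnR : (0 : ℝ) < (n : ℝ) := by exact_mod_cast hn
    calc (0 : ℝ) < 1 / (n : ℝ) := by positivity
    _ ≤ φ z := by exact_mod_cast h1
  refine ⟨φ, hadd, fun g h => ?_⟩
  constructor
  · intro hgh
    have h1 : r 1 (g⁻¹ * h) := by simpa using hr.mul_left g h g⁻¹ hgh
    have h2 := hpos _ h1
    rw [hadd, hφ_inv] at h2
    linarith
  · intro hlt
    by_contra hc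
    have h1 : le h g := by
      rcases le_total' g h with hgh | hgh
      · rcases hgh with hgh | hgh
        · exact absurd hgh hc
        · exact Or.inr hgh.symm
      · exact hgh
    have h2 : φ h ≤ φ g := by
      rcases h1 with h1 | h1
      · have h3 : r 1 (h⁻¹ * g) := by simpa using hr.mul_left h g h⁻¹ h1
        have h4 := hpos _ h3
        rw [hadd, hφ_inv] at h4
        linarith
      · rw [h1]
    linarith

/-- For a full archimedean order on a finitely generated abelian group with maximal antichain
subgroup `H`, the quotient `G/H` carries a total order inducing `≺`, and `≺` is induced by a
homomorphism to `ℝ` with the standard order. -/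
theorem abelian_full_archimedean_induced_by_real {G : Type*} [CommGroup G] [Group.FG G]
    (r : G → G → Prop) (hr : IsBIPO r) (hfull : FullOrder r) (harch : ArchimedeanOrderFor r)
    (H : Subgroup G) (hH : IsMaxAntichainSubgroup r H) :
    (∃ r' : (G ⧸ H) → (G ⧸ H) → Prop, IsBIPO r' ∧
      (∀ a b : G ⧸ H, a ≠ b → r' a b ∨ r' b a) ∧
      ∀ g h : G, r g h ↔ r' (g : G ⧸ H) (h : G ⧸ H)) ∧
    ∃ Φ : G → ℝ, (∀ a b : G, Φ (a * b) = Φ a + Φ b) ∧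
      ∀ g h : G, r g h ↔ Φ g < Φ h := by
  obtain ⟨r', hr', hspec⟩ := hfull.2 H hH.1
  -- totality of r' on the quotient
  have htot : ∀ a b : G ⧸ H, a ≠ b → r' a b ∨ r' b a := by
    intro a b hab
    obtain ⟨g, rfl⟩ := QuotientGroup.mk_surjective a
    obtain ⟨h, rfl⟩ := QuotientGroup.mk_surjective b
    by_contra hc
    push_neg at hc
    obtain ⟨h1, h2⟩ := hc
    set c := g⁻¹ * h with hc_def
    have hcH : c ∉ H := fun hmem => hab (QuotientGroup.eq.2 hmem)
    have key : ∀ k : ℤ, ¬ r 1 (c ^ k) := by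
      have k1 : ¬ r 1 c := by
        intro hx
        have hx2 : r g h := by
          have := hr.mul_left 1 c g hx
          simpa [hc_def, mul_assoc] using this
        exact h1 ((hspec g h).1 hx2)
      have k2 : ¬ r 1 c⁻¹ := by
        intro hx
        have hx2 : r h g := by
          have := hr.mul_left 1 c⁻¹ h hx
          simpa [hc_def, mul_assoc] using this
        exact h2 ((hspec h g).1 hx2)
      intro k hk
      rcases lt_trichotomy k 0 with hkl | rfl | hkg
      · apply k2
        have e1 : c ^ k = c⁻¹ ^ (-k).toNat := by
          rw [← zpow_natCast, Int.toNat_of_nonneg (show (0:ℤ) ≤ -k by omega), inv_zpow, ← zpow_neg, neg_neg]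
        rw [e1] at hk
        have := hfull.1 1 c⁻¹ (-k).toNat (by omega) (by simpa using hk)
        exact this
      · simp at hk
        exact hr.irrefl _ hk
      · apply k1
        have e1 : c ^ k = c ^ k.toNat := by
          rw [← zpow_natCast, Int.toNat_of_nonneg hkg.le]
        rw [e1] at hk
        exact hfull.1 1 c k.toNat (by omega) (by simpa using hk)
    set K : Subgroup G := Subgroup.closure {c} ⊔ H with hK_def
    have hmemchar : ∀ s ∈ K, ∃ m : ℤ, (s : G ⧸ H) = ((c : G ⧸ H)) ^ m := by
      intro s hs
      rcases Subgroup.mem_sup.1 hs with ⟨y, hy, z, hz, rfl⟩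
      obtain ⟨m, rfl⟩ := Subgroup.mem_closure_singleton.1 hy
      exact ⟨m, by
        rw [QuotientGroup.mk_mul, (QuotientGroup.eq_one_iff z).2 hz, mul_one,
          QuotientGroup.mk_zpow]⟩
    have hanti : IsAntichainFor r (K : Set G) := by
      intro s hs t ht hrst
      obtain ⟨m, hm⟩ := hmemchar s hs
      obtain ⟨n, hn⟩ := hmemchar t ht
      have hq : r' ((c : G ⧸ H) ^ m) ((c : G ⧸ H) ^ n) := by
        rw [← hm, ← hn]
        exact (hspec s t).1 hrst
      rw [← QuotientGroup.mk_zpow, ← QuotientGroup.mk_zpow] at hq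
      have hcc : r (c ^ m) (c ^ n) := (hspec _ _).2 hq
      have : r 1 (c ^ (-m + n)) := by
        have := hr.mul_left (c ^ m) (c ^ n) ((c ^ m)⁻¹) hcc
        rw [inv_mul_cancel, ← zpow_neg, ← zpow_add] at this
        exact this
      exact key _ this
    have hKH : K = H := hH.2 K hanti le_sup_right
    apply hcH
    rw [← hKH]
    exact Subgroup.mem_sup_left (Subgroup.subset_closure (Set.mem_singleton c))
  -- archimedean transfer
  have harch' : ¬ ∃ a b : G ⧸ H, r' 1 a ∧ ∀ i : ℤ, r' (a ^ i) b := by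
    rintro ⟨a, b, ha, hib⟩
    obtain ⟨g, rfl⟩ := QuotientGroup.mk_surjective a
    obtain ⟨h, rfl⟩ := QuotientGroup.mk_surjective b
    refine harch ⟨g, h, ?_, fun i => ?_⟩
    · rw [← QuotientGroup.mk_one] at ha
      exact (hspec 1 g).2 ha
    · have := hib i
      rw [← QuotientGroup.mk_zpow] at this
      exact (hspec _ _).2 this
  obtain ⟨φ, hφ_add, hφ_iff⟩ := holder_embed r' hr' htot harch'
  refine ⟨⟨r', hr', htot, hspec⟩, fun g => φ (g : G ⧸ H), fun a b => ?_, fun g h => ?_⟩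
  · show φ ((a * b : G) : G ⧸ H) = φ (a : G ⧸ H) + φ (b : G ⧸ H)
    rw [QuotientGroup.mk_mul, hφ_add]
  · rw [hspec, hφ_iff]
end

section
/- Let G be a group, N ⊴ G a normal subgroup, and π : G → G/N the projection. A bi-invariant partial order ≺ on G arises as the pullback along π of some non-trivial full archimedean bi-invariant partial order ≺' on G/N (i.e. g ≺ h iff π(g) ≺' π(h)) if and only if ≺ is a non-trivial full archimedean bi-invariant partial order on G such that N is an antichain with respect to ≺. -/
/-- The order is archimedean: no positive infinitesimal elements. -/
def ArchimedeanOrderRel {G : Type*} [Group G] (r : G → G → Prop) : Prop :=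
  ¬ ∃ g h : G, r 1 g ∧ ∀ i : ℤ, r (g ^ i) h

lemma isBIPO_pullback {G Q : Type*} [Group G] [Group Q] (φ : G →* Q)
    {r : Q → Q → Prop} (h : IsBIPO r) : IsBIPO (fun a b => r (φ a) (φ b)) where
  irrefl g := h.irrefl (φ g)
  antisymm g h' := h.antisymm (φ g) (φ h')
  trans f g h' := h.trans (φ f) (φ g) (φ h')
  mul_left f g h' hr := by simpa using h.mul_left (φ f) (φ g) (φ h') hr
  mul_right f g h' hr := by simpa using h.mul_right (φ f) (φ g) (φ h') hr

/-- Characterisation of the relative order sphere: an order on `G` is the pullback along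
`G → G/N` of a non-trivial full archimedean bi-invariant partial order on `G/N` iff it is
itself a non-trivial full archimedean bi-invariant partial order for which `N` is an
antichain. -/
theorem rel_order_sphere_characterisation {G : Type*} [Group G]
    (N : Subgroup G) [N.Normal] (r : G → G → Prop) :
    (∃ r' : (G ⧸ N) → (G ⧸ N) → Prop, IsBIPO r' ∧ NontrivialOrder r' ∧
      FullOrder r' ∧ ArchimedeanOrderRel r' ∧
      ∀ g h : G, r g h ↔ r' (g : G ⧸ N) (h : G ⧸ N)) ↔
    (IsBIPO r ∧ NontrivialOrder r ∧ FullOrder r ∧ ArchimedeanOrderRel r ∧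
      IsAntichainFor r (N : Set G)) := by
  constructor
  · rintro ⟨r', hB, hNT, ⟨hP, hF⟩, hA, hiff⟩
    refine ⟨?_, ?_, ⟨?_, ?_⟩, ?_, ?_⟩
    · have : r = fun g h => r' ((QuotientGroup.mk' N) g) ((QuotientGroup.mk' N) h) := by
        funext a b; exact propext (hiff a b)
      rw [this]; exact isBIPO_pullback _ hB
    · obtain ⟨a, b, hab⟩ := hNT
      obtain ⟨g, rfl⟩ := QuotientGroup.mk_surjective a
      obtain ⟨h, rfl⟩ := QuotientGroup.mk_surjective b
      exact ⟨g, h, (hiff g h).mpr hab⟩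
    · intro g h n hn hgh
      refine (hiff g h).mpr (hP _ _ n hn ?_)
      have := (hiff _ _).mp hgh
      simpa [← map_pow (QuotientGroup.mk' N)] using this
    · intro H _hHN hHanti
      set π := QuotientGroup.mk' N
      set H' : Subgroup (G ⧸ N) := H.map π with hH'
      haveI : H'.Normal := Subgroup.Normal.map ‹H.Normal› π (QuotientGroup.mk'_surjective N)
      have hH'anti : IsAntichainFor r' (H' : Set (G ⧸ N)) := by
        intro s hs t ht hst
        obtain ⟨g, hg, rfl⟩ := Subgroup.mem_map.mp hs
        obtain ⟨h, hh, rfl⟩ := Subgroup.mem_map.mp ht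
        exact hHanti g hg h hh ((hiff g h).mpr hst)
      obtain ⟨r'', hB'', hiff''⟩ := hF H' hH'anti
      have hmem : ∀ x ∈ H, ((QuotientGroup.mk' H').comp π) x = 1 := by
        intro x hx
        exact (QuotientGroup.eq_one_iff _).mpr (Subgroup.mem_map_of_mem π hx)
      refine ⟨fun a b => r'' (QuotientGroup.lift H ((QuotientGroup.mk' H').comp π) hmem a)
          (QuotientGroup.lift H ((QuotientGroup.mk' H').comp π) hmem b),
        isBIPO_pullback _ hB'', ?_⟩
      intro g h
      rw [hiff, hiff'']
      rfl
    · rintro ⟨g, h, h1, hi⟩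
      refine hA ⟨(g : G ⧸ N), (h : G ⧸ N), ?_, ?_⟩
      · simpa using (hiff 1 g).mp h1
      · intro i
        simpa [← map_zpow (QuotientGroup.mk' N)] using (hiff (g ^ i) h).mp (hi i)
    · intro s hs t ht hst
      have hst' := (hiff s t).mp hst
      rw [(QuotientGroup.eq_one_iff s).mpr hs, (QuotientGroup.eq_one_iff t).mpr ht] at hst'
      exact hB.irrefl 1 hst'
  · rintro ⟨hB, ⟨g0, h0, hg0⟩, ⟨hP, hF⟩, hA, hNanti⟩
    obtain ⟨r', hB', hiff⟩ := hF N hNanti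
    refine ⟨r', hB', ⟨_, _, (hiff g0 h0).mp hg0⟩, ⟨?_, ?_⟩, ?_, hiff⟩
    · intro x y n hn hxy
      obtain ⟨g, rfl⟩ := QuotientGroup.mk_surjective x
      obtain ⟨h, rfl⟩ := QuotientGroup.mk_surjective y
      refine (hiff g h).mp (hP g h n hn ((hiff _ _).mpr ?_))
      simpa [← map_pow (QuotientGroup.mk' N)] using hxy
    · intro K _hKN hKanti
      set K₀ : Subgroup G := K.comap (QuotientGroup.mk' N) with hK₀
      haveI : K₀.Normal := Subgroup.Normal.comap ‹K.Normal› _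
      have hK₀anti : IsAntichainFor r (K₀ : Set G) := by
        intro s hs t ht hst
        exact hKanti _ hs _ ht ((hiff s t).mp hst)
      obtain ⟨r'', hB'', hiff''⟩ := hF K₀ hK₀anti
      have hinner : ∀ x ∈ N, (QuotientGroup.mk' K₀) x = 1 := by
        intro x hx
        refine (QuotientGroup.eq_one_iff _).mpr (Subgroup.mem_comap.mpr ?_)
        rw [show ((QuotientGroup.mk' N) x) = 1 from (QuotientGroup.eq_one_iff x).mpr hx]
        exact K.one_mem
      have houter : ∀ y ∈ K, QuotientGroup.lift N (QuotientGroup.mk' K₀) hinner y = 1 := by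
        intro y hy
        obtain ⟨x, rfl⟩ := QuotientGroup.mk_surjective y
        exact (QuotientGroup.eq_one_iff x).mpr (Subgroup.mem_comap.mpr hy)
      refine ⟨fun a b =>
          r'' (QuotientGroup.lift K (QuotientGroup.lift N (QuotientGroup.mk' K₀) hinner) houter a)
            (QuotientGroup.lift K (QuotientGroup.lift N (QuotientGroup.mk' K₀) hinner) houter b),
        isBIPO_pullback _ hB'', ?_⟩
      intro x y
      obtain ⟨g, rfl⟩ := QuotientGroup.mk_surjective x
      obtain ⟨h, rfl⟩ := QuotientGroup.mk_surjective y
      rw [← hiff, hiff'']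
      rfl
    · rintro ⟨x, y, h1, hi⟩
      obtain ⟨g, rfl⟩ := QuotientGroup.mk_surjective x
      obtain ⟨h, rfl⟩ := QuotientGroup.mk_surjective y
      refine hA ⟨g, h, (hiff 1 g).mpr (by simpa using h1), fun i => (hiff _ _).mpr ?_⟩
      simpa [← map_zpow (QuotientGroup.mk' N)] using hi i
end

section
/- Let G be a finitely generated group, Q a finitely generated nilpotent group, and Φ : G → Q a surjective group homomorphism. Let P ⊴ Q be a normal subgroup, π : Q → Q/P the projection, and ≺ a bi-invariant partial order on Q/P whose positive cone is contained in the center Z(Q/P) and whose restriction to Z(Q/P) is total (any two distinct elements of Z(Q/P) are comparable). Set Ψ = π ∘ Φ : G → Q/P and H = Ψ⁻¹(Z(Q/P)) ≤ G, and equip G (respectively H) with the pullback order g ≺_G h iff Ψ(g) ≺ Ψ(h) (respectively its restriction to H). Then the following are equivalent: (a) for every normal subgroup K ⊴ G that is an antichain and is maximal among normal antichain subgroups of G, the set K_⪰ = {g ∈ G : g ∈ K or ∃ k ∈ K, k ≺_G g} is coarsely connected as a subset of G; (b) for every normal subgroup K ⊴ H that is an antichain and is maximal among normal antichain subgroups of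 H, the set K_⪰ = {g ∈ H : g ∈ K or ∃ k ∈ K, k ≺_G g} is coarsely connected as a subset of H. -/
/-- The order is archimedean: no positive infinitesimal elements. -/
def ArchimedeanOrderOfGroup {G : Type*} [Group G] (r : G → G → Prop) : Prop :=
  ¬ ∃ g h : G, r 1 g ∧ ∀ i : ℤ, r (g ^ i) h

/-- In a nilpotent group, a normal subgroup all of whose central elements are trivial
is trivial. -/
lemma aux_normal_meets_center {G : Type*} [Group G] [Group.IsNilpotent G]
    (L : Subgroup G) (hLn : L.Normal)
    (h : ∀ g ∈ L, g ∈ Subgroup.center G → g = 1) : ∀ g ∈ L, g = 1 := by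
  have key : ∀ i : ℕ, ∀ g ∈ L, g ∈ Subgroup.upperCentralSeries G i → g = 1 := by
    intro i
    induction i with
    | zero => intro g _ hg; simpa using hg
    | succ j ih =>
      intro g hgL hg
      refine h g hgL ?_
      rw [Subgroup.mem_center_iff]
      intro y
      have hc : g * y * g⁻¹ * y⁻¹ ∈ Subgroup.upperCentralSeries G j :=
        Subgroup.mem_upperCentralSeries_succ_iff.mp hg y
      have hcL : g * y * g⁻¹ * y⁻¹ ∈ L := by
        have h1 : y * g⁻¹ * y⁻¹ ∈ L := hLn.conj_mem g⁻¹ (L.inv_mem hgL) y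
        have h2 := L.mul_mem hgL h1
        convert h2 using 1
        group
      have h2 := ih _ hcL hc
      have h3 : g * y * g⁻¹ * y⁻¹ * (y * g) = g * y := by group
      rw [h2, one_mul] at h3
      exact h3
  obtain ⟨n, hn⟩ := Group.IsNilpotent.nilpotent (G := G)
  intro g hg
  exact key n g hg (hn ▸ Subgroup.mem_top g)

/-- A set containing `1` whose points are pairwise connected by chains with steps in a
finite set is coarsely connected. -/
lemma aux_cc_of_chains {G : Type*} [Group G] {A : Set G} (h1 : (1 : G) ∈ A)
    (S : Finset G)
    (hch : ∀ g ∈ A, ∀ h ∈ A, ∃ (n : ℕ) (c : ℕ → G),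
      c 0 = g ∧ c n = h ∧ (∀ i ≤ n, c i ∈ A) ∧
      ∀ i < n, (c i)⁻¹ * c (i + 1) ∈ (S : Set G) ∪ ((S : Set G))⁻¹) :
    CoarselyConnected A := by
  refine ⟨Subgroup.closure (S : Set G), S, ?_, rfl, hch⟩
  intro g hg
  obtain ⟨n, c, hc0, hcn, _, hstep⟩ := hch 1 h1 g hg
  have hcl : ∀ i ≤ n, c i ∈ Subgroup.closure (S : Set G) := by
    intro i
    induction i with
    | zero => intro _; rw [hc0]; exact one_mem _
    | succ j ih =>
      intro hj
      have hcj := ih (le_of_lt (Nat.lt_of_succ_le hj))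
      have hs := hstep j (Nat.lt_of_succ_le hj)
      have heq : c (j + 1) = c j * ((c j)⁻¹ * c (j + 1)) := by group
      rw [heq]
      refine mul_mem hcj ?_
      rcases hs with hs | hs
      · exact Subgroup.subset_closure hs
      · exact (inv_mem_iff (x := (c j)⁻¹ * c (j + 1))).mp
          (Subgroup.subset_closure (Set.mem_inv.mp hs))
  rw [← hcn]
  exact hcl n le_rfl

/-- Coarse connectedness transfers between a subgroup and the ambient group, for sets
containing `1` and contained in the subgroup. -/
lemma aux_cc_transfer {G : Type*} [Group G] (H : Subgroup G) (A : Set G)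
    (hA : A ⊆ (H : Set G)) (h1 : (1 : G) ∈ A) :
    CoarselyConnected A ↔ CoarselyConnected (((↑) : ↥H → G) ⁻¹' A) := by
  classical
  constructor
  · rintro ⟨H', S, _, _, hch⟩
    set T : Finset G := S ∪ S.image (·⁻¹) with hT
    set SH : Finset ↥H := T.subtype (· ∈ H) with hSH
    have h1' : (1 : ↥H) ∈ ((↑) : ↥H → G) ⁻¹' A := by
      simpa [Set.mem_preimage] using h1
    refine aux_cc_of_chains h1' SH ?_
    rintro x hx y hy
    obtain ⟨n, c, hc0, hcn, hmem, hstep⟩ := hch ↑x hx ↑y hy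
    have hcH : ∀ i, c (min i n) ∈ H := fun i => hA (hmem _ (min_le_right i n))
    refine ⟨n, fun i => ⟨c (min i n), hcH i⟩, ?_, ?_, ?_, ?_⟩
    · ext; simpa using hc0
    · ext; simpa using hcn
    · intro i hi
      simp only [Set.mem_preimage]
      exact hmem _ (min_le_right i n)
    · intro i hi
      have hmi : min i n = i := min_eq_left hi.le
      have hmi1 : min (i + 1) n = i + 1 := min_eq_left hi
      have hs := hstep i hi
      have hd : (c i)⁻¹ * c (i + 1) ∈ T := by
        rcases hs with hs | hs
        · exact Finset.mem_union_left _ hs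
        · refine Finset.mem_union_right _ ?_
          rw [Finset.mem_image]
          exact ⟨((c i)⁻¹ * c (i + 1))⁻¹, Set.mem_inv.mp hs, by simp⟩
      left
      show (⟨c (min i n), hcH i⟩ : ↥H)⁻¹ * ⟨c (min (i + 1) n), hcH (i + 1)⟩ ∈ (SH : Set ↥H)
      rw [Finset.mem_coe, hSH, Finset.mem_subtype]
      simpa [hmi, hmi1] using hd
  · rintro ⟨H', S, _, _, hch⟩
    refine aux_cc_of_chains h1 (S.image ((↑) : ↥H → G)) ?_
    intro g hg h hh
    obtain ⟨n, c, hc0, hcn, hmem, hstep⟩ :=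
      hch ⟨g, hA hg⟩ (by simpa [Set.mem_preimage] using hg)
        ⟨h, hA hh⟩ (by simpa [Set.mem_preimage] using hh)
    refine ⟨n, fun i => ↑(c i), by simp [hc0], by simp [hcn], ?_, ?_⟩
    · intro i hi
      exact hmem i hi
    · intro i hi
      have hs := hstep i hi
      have hcoe : ((c i)⁻¹ * c (i + 1) : ↥H) = (⟨(↑(c i))⁻¹ * ↑(c (i + 1)), by
          exact H.mul_mem (H.inv_mem (c i).2) (c (i + 1)).2⟩ : ↥H) := by
        ext; simp
      rcases hs with hs | hs
      · left
        rw [Finset.coe_image]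
        exact ⟨(c i)⁻¹ * c (i + 1), hs, by simp⟩
      · right
        rw [Set.mem_inv, Finset.coe_image]
        refine ⟨((c i)⁻¹ * c (i + 1))⁻¹, Set.mem_inv.mp hs, by simp⟩

/-- Passing the Σ-condition to the subgroup `H = Ψ⁻¹(Z(Q/P))`: for the pullback order on `G`
of an order on `Q/P` whose positive cone lies in the center and is total there, the coarse
connectedness condition on maximal normal antichain subgroups holds in `G` iff it holds
in `H`. -/
theorem bns_pass_to_subgroup {G Q : Type*} [Group G] [Group Q] [Group.FG G] [Group.FG Q]
    [Group.IsNilpotent Q]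
    (Φ : G →* Q) (hΦ : Function.Surjective Φ)
    (P : Subgroup Q) [P.Normal]
    (r : (Q ⧸ P) → (Q ⧸ P) → Prop) (hr : IsBIPO r)
    (hcone : ∀ q : Q ⧸ P, r 1 q → q ∈ Subgroup.center (Q ⧸ P))
    (htot : ∀ a b : Q ⧸ P, a ∈ Subgroup.center (Q ⧸ P) → b ∈ Subgroup.center (Q ⧸ P) →
      a ≠ b → r a b ∨ r b a)
    (Ψ : G →* Q ⧸ P) (hΨ : Ψ = (QuotientGroup.mk' P).comp Φ)
    (H : Subgroup G) (hH : H = (Subgroup.center (Q ⧸ P)).comap Ψ)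
    (rG : G → G → Prop) (hrG : ∀ g h : G, rG g h ↔ r (Ψ g) (Ψ h))
    (rH : ↥H → ↥H → Prop) (hrH : ∀ x y : ↥H, rH x y ↔ rG ↑x ↑y) :
    (∀ K : Subgroup G, K.Normal → IsAntichainFor rG (K : Set G) →
        (∀ K' : Subgroup G, K'.Normal → IsAntichainFor rG (K' : Set G) → K ≤ K' → K' = K) →
        CoarselyConnected {g : G | g ∈ K ∨ ∃ k ∈ (K : Set G), rG k g}) ↔
    (∀ K : Subgroup ↥H, K.Normal → IsAntichainFor rH (K : Set ↥H) →
        (∀ K' : Subgroup ↥H, K'.Normal → IsAntichainFor rH (K' : Set ↥H) → K ≤ K' → K' = K) →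
        CoarselyConnected {x : ↥H | x ∈ K ∨ ∃ k ∈ (K : Set ↥H), rH k x}) := by
  classical
  -- Ψ is surjective
  have hΨsurj : Function.Surjective Ψ := by
    rw [hΨ]
    exact (QuotientGroup.mk'_surjective P).comp hΦ
  -- basic facts about r
  have hr1 : ∀ a b : Q ⧸ P, r a b ↔ r 1 (a⁻¹ * b) := by
    intro a b
    constructor
    · intro h; have := hr.mul_left a b a⁻¹ h; simpa using this
    · intro h; have := hr.mul_left 1 (a⁻¹ * b) a h; simpa using this
  have hZchain : ∀ z : Q ⧸ P, z ∈ Subgroup.center (Q ⧸ P) → z ≠ 1 → r 1 z ∨ r 1 z⁻¹ := by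
    intro z hz hne
    rcases htot 1 z (Subgroup.one_mem _) hz (Ne.symm hne) with h | h
    · exact Or.inl h
    · right; have := hr.mul_right z 1 z⁻¹ h; simpa using this
  -- antichain characterization in G
  have hanti : ∀ K : Subgroup G,
      IsAntichainFor rG (K : Set G) ↔ ∀ k ∈ K, ¬ r 1 (Ψ k) := by
    intro K
    constructor
    · intro h k hk hrk
      exact h 1 K.one_mem k hk (by rw [hrG]; simpa using hrk)
    · intro h s hs t ht hst
      rw [hrG] at hst
      have h1 : r 1 ((Ψ s)⁻¹ * Ψ t) := (hr1 _ _).mp hst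
      have h2 : (Ψ s)⁻¹ * Ψ t = Ψ (s⁻¹ * t) := by simp
      exact h (s⁻¹ * t) (K.mul_mem (K.inv_mem hs) ht) (by rw [← h2]; exact h1)
  -- every normal antichain subgroup of G lies in ker Ψ (uses nilpotency)
  have hle : ∀ K : Subgroup G, K.Normal → IsAntichainFor rG (K : Set G) → K ≤ Ψ.ker := by
    intro K hKn hKa
    have hLn : (K.map Ψ).Normal := Subgroup.Normal.map hKn Ψ hΨsurj
    have hLanti : ∀ q ∈ K.map Ψ, ¬ r 1 q := by
      rintro q ⟨k, hk, rfl⟩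
      exact (hanti K).mp hKa k hk
    have hLtriv : ∀ q ∈ K.map Ψ, q = 1 := by
      refine aux_normal_meets_center _ hLn ?_
      intro q hq hqc
      by_contra hne
      rcases hZchain q hqc hne with h | h
      · exact hLanti q hq h
      · exact hLanti q⁻¹ ((K.map Ψ).inv_mem hq) h
    intro k hk
    exact hLtriv (Ψ k) ⟨k, hk, rfl⟩
  -- ker Ψ is a normal antichain subgroup
  have hkerA : IsAntichainFor rG (Ψ.ker : Set G) := by
    rw [hanti]
    intro k hk
    rw [MonoidHom.mem_ker] at hk
    rw [hk]
    exact hr.irrefl 1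
  have hkerMax : ∀ K' : Subgroup G, K'.Normal → IsAntichainFor rG (K' : Set G) →
      Ψ.ker ≤ K' → K' = Ψ.ker := by
    intro K' hn ha hle'
    exact le_antisymm (hle K' hn ha) hle'
  -- membership in H
  have hHmem : ∀ x : ↥H, Ψ ↑x ∈ Subgroup.center (Q ⧸ P) := by
    intro x
    have hx : (x : G) ∈ (Subgroup.center (Q ⧸ P)).comap Ψ := by
      rw [← hH]; exact x.2
    exact Subgroup.mem_comap.mp hx
  -- antichain characterization in H
  have hantiH : ∀ K : Subgroup ↥H,
      IsAntichainFor rH (K : Set ↥H) ↔ ∀ k ∈ K, ¬ r 1 (Ψ ↑k) := by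
    intro K
    constructor
    · intro h k hk hrk
      refine h 1 K.one_mem k hk ?_
      rw [hrH, hrG]
      simpa using hrk
    · intro h s hs t ht hst
      rw [hrH, hrG] at hst
      have h1 : r 1 ((Ψ ↑s)⁻¹ * Ψ ↑t) := (hr1 _ _).mp hst
      have h2 : (Ψ ↑s)⁻¹ * Ψ ↑t = Ψ ↑(s⁻¹ * t) := by
        push_cast
        simp
      exact h (s⁻¹ * t) (K.mul_mem (K.inv_mem hs) ht) (by rw [← h2]; exact h1)
  -- the kernel inside H
  set NH : Subgroup ↥H := (Ψ.comp H.subtype).ker with hNH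
  have hNHmem : ∀ x : ↥H, x ∈ NH ↔ Ψ ↑x = 1 := by
    intro x
    rw [hNH, MonoidHom.mem_ker, MonoidHom.comp_apply]
    rfl
  -- every antichain subgroup of H lies in NH (no normality needed)
  have hleH : ∀ K : Subgroup ↥H, IsAntichainFor rH (K : Set ↥H) → K ≤ NH := by
    intro K hKa k hk
    rw [hNHmem]
    by_contra hne
    rcases hZchain (Ψ ↑k) (hHmem k) hne with h | h
    · exact (hantiH K).mp hKa k hk h
    · refine (hantiH K).mp hKa k⁻¹ (K.inv_mem hk) ?_
      have : Ψ ↑(k⁻¹) = (Ψ ↑k)⁻¹ := by push_cast; simp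
      rw [this]
      exact h
  have hNHanti : IsAntichainFor rH (NH : Set ↥H) := by
    rw [hantiH]
    intro k hk
    rw [hNHmem] at hk
    rw [hk]
    exact hr.irrefl 1
  have hNHnormal : NH.Normal := MonoidHom.normal_ker _
  have hNHMax : ∀ K' : Subgroup ↥H, K'.Normal → IsAntichainFor rH (K' : Set ↥H) →
      NH ≤ K' → K' = NH := by
    intro K' _ ha hle'
    exact le_antisymm (hleH K' ha) hle'
  -- the set A
  set A : Set G := {g : G | Ψ g = 1 ∨ r 1 (Ψ g)} with hAdef
  have hAker : {g : G | g ∈ Ψ.ker ∨ ∃ k ∈ (Ψ.ker : Set G), rG k g} = A := by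
    ext g
    simp only [hAdef, Set.mem_setOf_eq, SetLike.mem_coe, MonoidHom.mem_ker]
    constructor
    · rintro (h | ⟨k, hk, hkg⟩)
      · exact Or.inl h
      · right
        rw [hrG, hk] at hkg
        exact hkg
    · rintro (h | h)
      · exact Or.inl h
      · exact Or.inr ⟨1, map_one Ψ, by rw [hrG, map_one]; exact h⟩
  have hANH : ∀ K : Subgroup ↥H, K = NH →
      {x : ↥H | x ∈ K ∨ ∃ k ∈ (K : Set ↥H), rH k x} = ((↑) : ↥H → G) ⁻¹' A := by
    rintro K rfl
    ext x
    simp only [hAdef, Set.mem_preimage, Set.mem_setOf_eq, SetLike.mem_coe]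
    constructor
    · rintro (h | ⟨k, hk, hkx⟩)
      · exact Or.inl ((hNHmem x).mp h)
      · right
        rw [hrH, hrG] at hkx
        rw [(hNHmem k).mp hk] at hkx
        exact hkx
    · rintro (h | h)
      · exact Or.inl ((hNHmem x).mpr h)
      · refine Or.inr ⟨1, (hNHmem 1).mpr (by simp), ?_⟩
        rw [hrH, hrG]
        simpa using h
  have hAsub : A ⊆ (H : Set G) := by
    intro g hg
    have hc : Ψ g ∈ Subgroup.center (Q ⧸ P) := by
      rcases hg with h | h
      · rw [h]; exact Subgroup.one_mem _
      · exact hcone _ h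
    rw [hH]
    exact hc
  have hA1 : (1 : G) ∈ A := Or.inl (map_one Ψ)
  -- main equivalence
  constructor
  · intro ha K hKn hKa hKmax
    have hK : K = NH := (hKmax NH hNHnormal hNHanti (hleH K hKa)).symm
    rw [hANH K hK]
    rw [← aux_cc_transfer H A hAsub hA1]
    have := ha Ψ.ker inferInstance hkerA hkerMax
    rwa [hAker] at this
  · intro hb K hKn hKa hKmax
    have hK : K = Ψ.ker := (hKmax Ψ.ker inferInstance hkerA (hle K hKn hKa)).symm
    rw [hK, hAker]
    rw [aux_cc_transfer H A hAsub hA1]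
    have := hb NH hNHnormal hNHanti hNHMax
    rwa [hANH NH rfl] at this
end
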